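/- arXiv:1903.00135 — 2 statements merged into one kernel-verified Lean document; each statement's English description precedes it below -/
import Mathlib

section
/- Marginalization of a stationary distribution: let (Y_k, Q_k) be a time-homogeneous Markov chain on Y × ℕ (Y finite) such that the conditional law of Y_{k+1} given (Y_k, Q_k) = (y,q) and action A_k = a does not depend on q. Let π be a stationary distribution of the joint chain under a stationary randomized policy θ: Y×ℕ → [0,1], and define the projected policy φ(y) = (∑_q θ(y,q)π(y,q)) / (∑_q π(y,q)) (whenever the denominator is positive). Then the marginal π̄(y) := ∑_q π(y,q) is a stationary distribution for the Y-marginal chain under policy φ. -/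
/-- Marginalization of a stationary distribution: for a Markov chain on `Y × ℕ` whose
`Y`-marginal transition law does not depend on the queue coordinate, if `pi` is a stationary
distribution under a stationary randomized policy `θ`, then the marginal
`π̄(y) = ∑_q pi(y,q)` is stationary for the `Y`-marginal chain under the projected policy
`φ(y) = (∑_q θ(y,q) pi(y,q)) / (∑_q pi(y,q))`. -/
theorem stmt12 {Y : Type*} [Fintype Y]
    (KW KR : Y × ℕ → Y × ℕ → ℝ) (PW PR : Y → Y → ℝ)
    (hKWnn : ∀ z z', 0 ≤ KW z z') (hKRnn : ∀ z z', 0 ≤ KR z z')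
    (hKWrow : ∀ z, ∑' z', KW z z' = 1) (hKRrow : ∀ z, ∑' z', KR z z' = 1)
    (hmargW : ∀ y q y', ∑' q', KW (y, q) (y', q') = PW y y')
    (hmargR : ∀ y q y', ∑' q', KR (y, q) (y', q') = PR y y')
    (θ : Y × ℕ → ℝ) (hθ : ∀ z, θ z ∈ Set.Icc (0 : ℝ) 1)
    (pi : Y × ℕ → ℝ) (hpinn : ∀ z, 0 ≤ pi z) (hsum : Summable pi)
    (htot : ∑' z, pi z = 1)
    (hstat : ∀ z', pi z' = ∑' z, pi z * (θ z * KW z z' + (1 - θ z) * KR z z'))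
    (hpos : ∀ y, 0 < ∑' q, pi (y, q)) :
    ∀ y' : Y, (∑' q, pi (y', q)) =
      ∑ y, (∑' q, pi (y, q)) *
        (((∑' q, θ (y, q) * pi (y, q)) / (∑' q, pi (y, q))) * PW y y'
          + (1 - (∑' q, θ (y, q) * pi (y, q)) / (∑' q, pi (y, q))) * PR y y') := by
  intro y'
  -- basic summability facts
  have hKWs : ∀ z, Summable (KW z) := by
    intro z
    by_contra h
    exact one_ne_zero ((hKWrow z).symm.trans (tsum_eq_zero_of_not_summable h))
  have hKRs : ∀ z, Summable (KR z) := by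
    intro z
    by_contra h
    exact one_ne_zero ((hKRrow z).symm.trans (tsum_eq_zero_of_not_summable h))
  have hinj : ∀ y : Y, Function.Injective (fun q : ℕ => ((y, q) : Y × ℕ)) := by
    intro y a b h; exact (Prod.ext_iff.1 h).2
  have hKWsec : ∀ z (y : Y), Summable (fun q' => KW z (y, q')) :=
    fun z y => (hKWs z).comp_injective (hinj y)
  have hKRsec : ∀ z (y : Y), Summable (fun q' => KR z (y, q')) :=
    fun z y => (hKRs z).comp_injective (hinj y)
  have hpisec : ∀ y : Y, Summable (fun q => pi (y, q)) :=
    fun y => hsum.comp_injective (hinj y)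
  have hθpisec : ∀ y : Y, Summable (fun q => θ (y, q) * pi (y, q)) := by
    intro y
    refine (hpisec y).of_nonneg_of_le
      (fun q => mul_nonneg (hθ (y, q)).1 (hpinn _)) (fun q => ?_)
    exact mul_le_of_le_one_left (hpinn _) (hθ (y, q)).2
  -- PW, PR are bounded by 1 and nonneg
  have hPWnn : ∀ y y₀, 0 ≤ PW y y₀ := by
    intro y y₀
    rw [← hmargW y 0 y₀]
    exact tsum_nonneg fun q' => hKWnn _ _
  have hPRnn : ∀ y y₀, 0 ≤ PR y y₀ := by
    intro y y₀
    rw [← hmargR y 0 y₀]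
    exact tsum_nonneg fun q' => hKRnn _ _
  have hPWle : ∀ y y₀, PW y y₀ ≤ 1 := by
    intro y y₀
    rw [← hmargW y 0 y₀, ← hKWrow (y, 0)]
    exact Summable.tsum_le_tsum_of_inj _ (hinj y₀) (fun c _ => hKWnn _ _)
      (fun q' => le_refl _) (hKWsec (y, 0) y₀) (hKWs (y, 0))
  have hPRle : ∀ y y₀, PR y y₀ ≤ 1 := by
    intro y y₀
    rw [← hmargR y 0 y₀, ← hKRrow (y, 0)]
    exact Summable.tsum_le_tsum_of_inj _ (hinj y₀) (fun c _ => hKRnn _ _)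
      (fun q' => le_refl _) (hKRsec (y, 0) y₀) (hKRs (y, 0))
  -- the double family
  set F : (Y × ℕ) → ℕ → ℝ :=
    fun z q' => pi z * (θ z * KW z (y', q') + (1 - θ z) * KR z (y', q')) with hF
  have hθnn : ∀ z, (0:ℝ) ≤ θ z := fun z => (hθ z).1
  have hθ1 : ∀ z, θ z ≤ 1 := fun z => (hθ z).2
  have hFnn : ∀ z q', 0 ≤ F z q' := by
    intro z q'
    exact mul_nonneg (hpinn z) (add_nonneg (mul_nonneg (hθnn z) (hKWnn _ _))
      (mul_nonneg (by linarith [hθ1 z]) (hKRnn _ _)))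
  have hFsec : ∀ z, Summable (F z) := by
    intro z
    exact (((hKWsec z y').mul_left (θ z)).add ((hKRsec z y').mul_left (1 - θ z))).mul_left (pi z)
  have hFtsum : ∀ z : Y × ℕ, ∑' q', F z q' =
      pi z * (θ z * PW z.1 y' + (1 - θ z) * PR z.1 y') := by
    rintro ⟨y, q⟩
    rw [hF]
    simp only
    rw [tsum_mul_left, Summable.tsum_add (((hKWsec (y,q) y').mul_left (θ (y,q))))
        (((hKRsec (y,q) y').mul_left (1 - θ (y,q)))), tsum_mul_left, tsum_mul_left,
      hmargW y q y', hmargR y q y']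
  have hG : Summable (fun z : Y × ℕ => pi z * (θ z * PW z.1 y' + (1 - θ z) * PR z.1 y')) := by
    refine hsum.of_nonneg_of_le (fun z => by
      exact mul_nonneg (hpinn z) (add_nonneg (mul_nonneg (hθnn z) (hPWnn _ _))
        (mul_nonneg (by linarith [hθ1 z]) (hPRnn _ _)))) (fun z => ?_)
    have h1 : θ z * PW z.1 y' + (1 - θ z) * PR z.1 y' ≤ 1 := by
      have := hPWle z.1 y'; have := hPRle z.1 y'
      nlinarith [hθnn z, hθ1 z, hPWnn z.1 y', hPRnn z.1 y']
    calc pi z * (θ z * PW z.1 y' + (1 - θ z) * PR z.1 y')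
        ≤ pi z * 1 := by exact mul_le_mul_of_nonneg_left h1 (hpinn z)
      _ = pi z := mul_one _
  have hFun : Summable (Function.uncurry F) := by
    rw [show Function.uncurry F = fun p : (Y × ℕ) × ℕ => F p.1 p.2 from rfl]
    rw [summable_prod_of_nonneg (fun p => hFnn p.1 p.2)]
    constructor
    · intro z; exact hFsec z
    · refine hG.congr fun z => ?_
      exact (hFtsum z).symm
  -- Step 1: marginal of hstat
  have key : (∑' q, pi (y', q)) =
      ∑' z : Y × ℕ, pi z * (θ z * PW z.1 y' + (1 - θ z) * PR z.1 y') := by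
    have h1 : (∑' q', pi (y', q')) = ∑' q', ∑' z, F z q' := by
      apply tsum_congr; intro q'; exact hstat (y', q')
    rw [h1, Summable.tsum_comm' hFun hFsec (fun q' => hFun.prod_symm.prod_factor q'), tsum_congr hFtsum]
  -- Step 2: split the z-sum over Y × ℕ
  rw [key, Summable.tsum_prod' hG (fun y => hG.prod_factor y), tsum_fintype]
  apply Finset.sum_congr rfl
  intro y _
  -- per-y computation
  set S : ℝ := ∑' q, θ (y, q) * pi (y, q) with hS
  set T : ℝ := ∑' q, pi (y, q) with hT
  have hTpos : 0 < T := hpos y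
  have hlhs : (∑' q, pi (y, q) * (θ (y, q) * PW y y' + (1 - θ (y, q)) * PR y y'))
      = S * PW y y' + (T - S) * PR y y' := by
    have hcong : ∀ q : ℕ, pi (y, q) * (θ (y, q) * PW y y' + (1 - θ (y, q)) * PR y y')
        = θ (y, q) * pi (y, q) * PW y y' + (pi (y, q) - θ (y, q) * pi (y, q)) * PR y y' := by
      intro q; ring
    rw [tsum_congr hcong,
      Summable.tsum_add (((hθpisec y).mul_right _)) ((((hpisec y).sub (hθpisec y)).mul_right _)),
      tsum_mul_right, tsum_mul_right, Summable.tsum_sub (hpisec y) (hθpisec y)]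
  rw [hlhs]
  field_simp
end

section
/- Optimality of deterministic policies over randomized stationary policies for the long-run average reward on a finite MDP: for a finite state space Y and finite action sets, the maximum over stationary randomized policies of the long-run average reward (computed via stationary distributions) is attained by a stationary deterministic policy; formally, max over φ: Y → [0,1] of sup_{π stationary for P^φ} ∑_y r(y)·(reward rate under φ at y) equals the max restricted to φ taking values in {0,1}. -/
open Finset Filter

lemma exists_stationary {Y : Type*} [Fintype Y] [DecidableEq Y]
    (P : Matrix Y Y ℝ) (hnn : ∀ y y', 0 ≤ P y y')
    (hrow : ∀ y, ∑ y', P y y' = 1) (T : Finset Y) (y0 : Y) (hy0 : y0 ∈ T)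
    (hclosed : ∀ y ∈ T, ∀ y' ∉ T, P y y' = 0) :
    ∃ z : Y → ℝ, (∀ y, 0 ≤ z y) ∧ (∀ y ∉ T, z y = 0) ∧ (∑ y, z y = 1) ∧
      (∀ y', ∑ y, z y * P y y' = z y') := by
  classical
  -- iterates of the delta measure at y0
  obtain ⟨f, hf0, hfs⟩ : ∃ f : ℕ → Y → ℝ, (f 0 = fun y => if y = y0 then 1 else 0) ∧
      ∀ k, f (k+1) = fun y' => ∑ y, f k y * P y y' :=
    ⟨fun k => Nat.rec (fun y => if y = y0 then 1 else 0)
      (fun _ g y' => ∑ y, g y * P y y') k, rfl, fun _ => rfl⟩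
  have hfnn : ∀ k y, 0 ≤ f k y := by
    intro k
    induction k with
    | zero => intro y; rw [hf0]; positivity
    | succ k ih => intro y; rw [hfs]
                   exact Finset.sum_nonneg fun y' _ => mul_nonneg (ih y') (hnn y' y)
  have hfT : ∀ k y, y ∉ T → f k y = 0 := by
    intro k
    induction k with
    | zero => intro y hy; rw [hf0]; simp only
              rw [if_neg]; rintro rfl; exact hy hy0
    | succ k ih => intro y hy; rw [hfs]
                   refine Finset.sum_eq_zero fun y' _ => ?_
                   by_cases h' : y' ∈ T
                   · rw [hclosed y' h' y hy, mul_zero]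
                   · rw [ih y' h', zero_mul]
  have hfsum : ∀ k, ∑ y, f k y = 1 := by
    intro k
    induction k with
    | zero => rw [hf0]; simp
    | succ k ih => rw [hfs]
                   rw [Finset.sum_comm]
                   simp_rw [← Finset.mul_sum, hrow, mul_one]
                   exact ih
  -- Cesaro averages
  set a : ℕ → Y → ℝ := fun n y => (∑ k ∈ Finset.range (n+1), f k y) / (n+1) with ha
  have hann : ∀ n y, 0 ≤ a n y := fun n y =>
    div_nonneg (Finset.sum_nonneg fun k _ => hfnn k y) (by positivity)
  have hasum : ∀ n, ∑ y, a n y = 1 := by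
    intro n
    rw [ha]
    simp only
    rw [← Finset.sum_div, Finset.sum_comm]
    simp_rw [hfsum]
    rw [Finset.sum_const, Finset.card_range, nsmul_eq_mul]
    push_cast
    rw [mul_one, div_self]
    positivity
  have haT : ∀ n, ∀ y ∉ T, a n y = 0 := by
    intro n y hy
    rw [ha]; simp only
    rw [Finset.sum_eq_zero fun k _ => hfT k y hy, zero_div]
  have hale : ∀ n y, a n y ≤ 1 := by
    intro n y
    calc a n y ≤ ∑ y', a n y' :=
          Finset.single_le_sum (fun y' _ => hann n y') (Finset.mem_univ y)
      _ = 1 := hasum n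
  have hmem : ∀ n, a n ∈ Set.pi Set.univ (fun _ : Y => Set.Icc (0:ℝ) 1) := by
    intro n y _; exact ⟨hann n y, hale n y⟩
  obtain ⟨z, hzK, ψ, hψ, hlim⟩ :=
    (isCompact_univ_pi (fun _ : Y => isCompact_Icc)).tendsto_subseq hmem
  have hlimc : ∀ y, Tendsto (fun n => a (ψ n) y) atTop (nhds (z y)) := by
    intro y
    exact (tendsto_pi_nhds.mp hlim) y
  have hznn : ∀ y, 0 ≤ z y := fun y =>
    le_of_tendsto_of_tendsto' tendsto_const_nhds (hlimc y) (fun n => hann _ y)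
  have hzT : ∀ y ∉ T, z y = 0 := by
    intro y hy
    have : Tendsto (fun n => a (ψ n) y) atTop (nhds 0) := by
      simp_rw [fun n => haT (ψ n) y hy]; exact tendsto_const_nhds
    exact (tendsto_nhds_unique (hlimc y) this).symm ▸ rfl
  have hzsum : ∑ y, z y = 1 := by
    have h1 : Tendsto (fun n => ∑ y, a (ψ n) y) atTop (nhds (∑ y, z y)) :=
      tendsto_finset_sum _ fun y _ => hlimc y
    have h2 : Tendsto (fun n => ∑ y, a (ψ n) y) atTop (nhds 1) := by
      simp_rw [hasum]; exact tendsto_const_nhds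
    exact tendsto_nhds_unique h1 h2
  refine ⟨z, hznn, hzT, hzsum, ?_⟩
  intro y'
  -- key identity
  have key : ∀ n, ∑ y, a n y * P y y' = a n y' + (f (n+1) y' - f 0 y')/(n+1) := by
    intro n
    rw [ha]; simp only
    rw [← add_div]
    simp_rw [div_mul_eq_mul_div]
    rw [← Finset.sum_div]
    congr 1
    simp_rw [Finset.sum_mul]
    rw [Finset.sum_comm]
    have e1 : ∀ k, ∑ x, f k x * P x y' = f (k+1) y' := by
      intro k; rw [hfs]
    simp_rw [e1]
    have e2 := Finset.sum_range_succ' (fun k => f k y') (n+1)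
    have e3 := Finset.sum_range_succ (fun k => f k y') (n+1)
    linarith
  have herr : Tendsto (fun n => (f (ψ n + 1) y' - f 0 y') / (ψ n + 1 : ℝ)) atTop (nhds 0) := by
    have htend : Tendsto (fun n : ℕ => 2 / (n + 1 : ℝ)) atTop (nhds 0) := by
      have := tendsto_one_div_add_atTop_nhds_zero_nat.const_mul (2:ℝ)
      simpa [mul_one_div, div_eq_mul_inv] using this
    refine squeeze_zero_norm ?_ htend
    · intro n
      have hb : |f (ψ n + 1) y' - f 0 y'| ≤ 2 := by
        have h1 : f (ψ n + 1) y' ≤ 1 := by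
          calc f (ψ n + 1) y' ≤ ∑ y, f (ψ n + 1) y :=
                Finset.single_le_sum (fun y _ => hfnn _ y) (Finset.mem_univ y')
            _ = 1 := hfsum _
        have h2 : f 0 y' ≤ 1 := by
          calc f 0 y' ≤ ∑ y, f 0 y :=
                Finset.single_le_sum (fun y _ => hfnn _ y) (Finset.mem_univ y')
            _ = 1 := hfsum _
        rw [abs_le]
        constructor <;> nlinarith [hfnn (ψ n + 1) y', hfnn 0 y']
      have hψn : (n : ℝ) ≤ ψ n := by exact_mod_cast hψ.le_apply
      rw [Real.norm_eq_abs, abs_div, abs_of_pos (by positivity : (0:ℝ) < (ψ n + 1 : ℝ))]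
      exact div_le_div₀ (by norm_num) hb (by positivity) (by linarith)
  have hL : Tendsto (fun n => ∑ y, a (ψ n) y * P y y') atTop (nhds (∑ y, z y * P y y')) := by
    apply tendsto_finset_sum
    intro y _
    exact (hlimc y).mul_const _
  have hR : Tendsto (fun n => ∑ y, a (ψ n) y * P y y') atTop (nhds (z y')) := by
    simp_rw [fun n => key (ψ n)]
    have := (hlimc y').add herr
    simpa using this
  exact tendsto_nhds_unique hL hR

section defs
variable {Y : Type*} [Fintype Y]

def Gmap (PW PR : Matrix Y Y ℝ) (φ0 : Y → ℝ) (y0 : Y) (p : (Y → ℝ) × ℝ) (y' : Y) : ℝ :=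
  (∑ y, p.1 y * (φ0 y * PW y y' + (1 - φ0 y) * PR y y')) + p.2 * (PW y0 y' - PR y0 y')

def Lmap (r φ0 : Y → ℝ) (y0 : Y) (p : (Y → ℝ) × ℝ) : ℝ :=
  (∑ y, p.1 y * r y * φ0 y) + p.2 * r y0

lemma Gmap_line (PW PR : Matrix Y Y ℝ) (φ0 : Y → ℝ) (y0 : Y)
    (u v : Y → ℝ) (s w t : ℝ) (y' : Y) :
    Gmap PW PR φ0 y0 (fun y => u y + t * (v y - u y), s + t * (w - s)) y' =
      Gmap PW PR φ0 y0 (u, s) y' +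
        t * (Gmap PW PR φ0 y0 (v, w) y' - Gmap PW PR φ0 y0 (u, s) y') := by
  simp only [Gmap, add_mul, sub_mul, mul_assoc, Finset.sum_add_distrib, ← Finset.mul_sum,
    Finset.sum_sub_distrib]
  ring

lemma Lmap_line (r φ0 : Y → ℝ) (y0 : Y) (u v : Y → ℝ) (s w t : ℝ) :
    Lmap r φ0 y0 (fun y => u y + t * (v y - u y), s + t * (w - s)) =
      Lmap r φ0 y0 (u, s) + t * (Lmap r φ0 y0 (v, w) - Lmap r φ0 y0 (u, s)) := by
  simp only [Lmap, add_mul, sub_mul, mul_assoc, Finset.sum_add_distrib, ← Finset.mul_sum,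
    Finset.sum_sub_distrib]
  ring

lemma Gmap_continuous (PW PR : Matrix Y Y ℝ) (φ0 : Y → ℝ) (y0 : Y) (y' : Y) :
    Continuous (fun p => Gmap PW PR φ0 y0 p y') := by
  unfold Gmap
  refine Continuous.add (continuous_finset_sum _ fun y _ => ?_)
    (continuous_snd.mul continuous_const)
  exact ((continuous_apply y).comp continuous_fst).mul continuous_const

lemma Lmap_continuous (r φ0 : Y → ℝ) (y0 : Y) : Continuous (Lmap r φ0 y0) := by
  unfold Lmap
  refine Continuous.add (continuous_finset_sum _ fun y _ => ?_)
    (continuous_snd.mul continuous_const)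
  exact (((continuous_apply y).comp continuous_fst).mul continuous_const).mul continuous_const

end defs

section step
variable {Y : Type*} [Fintype Y] [DecidableEq Y]

lemma derandom_step (PW PR : Matrix Y Y ℝ)
    (hWnn : ∀ y y', 0 ≤ PW y y') (hWrow : ∀ y, ∑ y', PW y y' = 1)
    (hRnn : ∀ y y', 0 ≤ PR y y') (hRrow : ∀ y, ∑ y', PR y y' = 1)
    (r : Y → ℝ)
    (φ : Y → ℝ) (hφ : ∀ y, φ y ∈ Set.Icc (0:ℝ) 1)
    (pi : Y → ℝ) (hπnn : ∀ y, 0 ≤ pi y) (hπsum : ∑ y, pi y = 1)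
    (hπstat : ∀ y', ∑ y, pi y * (φ y * PW y y' + (1 - φ y) * PR y y') = pi y')
    (y0 : Y)
    (exists_stationary : ∀ (P : Matrix Y Y ℝ), (∀ y y', 0 ≤ P y y') →
      (∀ y, ∑ y', P y y' = 1) → ∀ (T : Finset Y) (z0 : Y), z0 ∈ T →
      (∀ y ∈ T, ∀ y' ∉ T, P y y' = 0) →
      ∃ z : Y → ℝ, (∀ y, 0 ≤ z y) ∧ (∀ y ∉ T, z y = 0) ∧ (∑ y, z y = 1) ∧
        (∀ y', ∑ y, z y * P y y' = z y')) :
    ∃ lam : ℝ, (lam = 0 ∨ lam = 1) ∧ ∃ pi' : Y → ℝ, (∀ y, 0 ≤ pi' y) ∧ (∑ y, pi' y = 1) ∧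
      (∀ y', ∑ y, pi' y * (Function.update φ y0 lam y * PW y y' +
          (1 - Function.update φ y0 lam y) * PR y y') = pi' y') ∧
      ∑ y, pi y * r y * φ y ≤ ∑ y, pi' y * r y * Function.update φ y0 lam y := by
  classical
  set φ0 : Y → ℝ := Function.update φ y0 0 with hφ0
  have hφ0ne : ∀ y, y ≠ y0 → φ0 y = φ y := fun y hy => Function.update_of_ne hy _ _
  have hφ0self : φ0 y0 = 0 := Function.update_self _ _ _
  have hφ0mem : ∀ y, φ0 y ∈ Set.Icc (0:ℝ) 1 := by
    intro y
    by_cases hy : y = y0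
    · subst hy; rw [hφ0self]; exact ⟨le_refl 0, zero_le_one⟩
    · rw [hφ0ne y hy]; exact hφ y
  set G := Gmap PW PR φ0 y0 with hG
  set L := Lmap r φ0 y0 with hL
  -- translation identities
  have hA : ∀ (lam : ℝ) (x : Y → ℝ) (y' : Y),
      ∑ y, x y * (Function.update φ y0 lam y * PW y y' +
          (1 - Function.update φ y0 lam y) * PR y y') = G (x, lam * x y0) y' := by
    intro lam x y'
    have h1 := Finset.sum_erase_add Finset.univ
      (fun y => x y * (Function.update φ y0 lam y * PW y y' +
        (1 - Function.update φ y0 lam y) * PR y y')) (Finset.mem_univ y0)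
    have h2 := Finset.sum_erase_add Finset.univ
      (fun y => x y * (φ0 y * PW y y' + (1 - φ0 y) * PR y y')) (Finset.mem_univ y0)
    have h3 : ∑ y ∈ Finset.univ.erase y0,
        x y * (Function.update φ y0 lam y * PW y y' +
          (1 - Function.update φ y0 lam y) * PR y y')
        = ∑ y ∈ Finset.univ.erase y0, x y * (φ0 y * PW y y' + (1 - φ0 y) * PR y y') := by
      refine Finset.sum_congr rfl fun y hy => ?_
      have hne : y ≠ y0 := Finset.ne_of_mem_erase hy
      rw [Function.update_of_ne hne, hφ0ne y hne]
    show _ = (∑ y, x y * (φ0 y * PW y y' + (1 - φ0 y) * PR y y'))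
        + (lam * x y0) * (PW y0 y' - PR y0 y')
    rw [← h1, ← h2, h3]
    simp only [Function.update_self, hφ0self]
    ring
  have hV : ∀ (lam : ℝ) (x : Y → ℝ),
      ∑ y, x y * r y * Function.update φ y0 lam y = L (x, lam * x y0) := by
    intro lam x
    have h1 := Finset.sum_erase_add Finset.univ
      (fun y => x y * r y * Function.update φ y0 lam y) (Finset.mem_univ y0)
    have h2 := Finset.sum_erase_add Finset.univ
      (fun y => x y * r y * φ0 y) (Finset.mem_univ y0)
    have h3 : ∑ y ∈ Finset.univ.erase y0, x y * r y * Function.update φ y0 lam y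
        = ∑ y ∈ Finset.univ.erase y0, x y * r y * φ0 y := by
      refine Finset.sum_congr rfl fun y hy => ?_
      have hne : y ≠ y0 := Finset.ne_of_mem_erase hy
      rw [Function.update_of_ne hne, hφ0ne y hne]
    show _ = (∑ y, x y * r y * φ0 y) + (lam * x y0) * r y0
    rw [← h1, ← h2, h3]
    simp only [Function.update_self, hφ0self]
    ring
  -- the feasible polytope
  set F1 : Set ((Y → ℝ) × ℝ) := {p | (∀ y, 0 ≤ p.1 y) ∧ (∑ y, p.1 y = 1) ∧ 0 ≤ p.2 ∧
      p.2 ≤ p.1 y0 ∧ ∀ y', G p y' = p.1 y'} with hF1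
  have hp0 : (pi, φ y0 * pi y0) ∈ F1 := by
    refine ⟨hπnn, hπsum, mul_nonneg (hφ y0).1 (hπnn y0), ?_, ?_⟩
    · calc φ y0 * pi y0 ≤ 1 * pi y0 := mul_le_mul_of_nonneg_right (hφ y0).2 (hπnn y0)
        _ = pi y0 := one_mul _
    · intro y'
      rw [← hA (φ y0) pi y']
      have : Function.update φ y0 (φ y0) = φ := Function.update_eq_self _ _
      rw [this]
      exact hπstat y'
  have hLp0 : L (pi, φ y0 * pi y0) = ∑ y, pi y * r y * φ y := by
    rw [← hV (φ y0) pi, Function.update_eq_self]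
  -- compactness of F1
  have hcx : ∀ y : Y, Continuous fun p : (Y → ℝ) × ℝ => p.1 y := fun y =>
    (continuous_apply y).comp continuous_fst
  have hF1closed : IsClosed F1 := by
    have hrepr : F1 = (⋂ y, {p : (Y → ℝ) × ℝ | 0 ≤ p.1 y}) ∩ ({p | ∑ y, p.1 y = 1} ∩
        ({p | 0 ≤ p.2} ∩ ({p | p.2 ≤ p.1 y0} ∩ ⋂ y', {p | G p y' = p.1 y'}))) := by
      ext p
      simp only [hF1, Set.mem_inter_iff, Set.mem_iInter, Set.mem_setOf_eq]
      try tauto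
    rw [hrepr]
    exact (isClosed_iInter fun y => isClosed_le continuous_const (hcx y)).inter
      ((isClosed_eq (continuous_finset_sum _ fun y _ => hcx y) continuous_const).inter
        ((isClosed_le continuous_const continuous_snd).inter
          ((isClosed_le continuous_snd (hcx y0)).inter
            (isClosed_iInter fun y' =>
              isClosed_eq (Gmap_continuous PW PR φ0 y0 y') (hcx y')))))
  have hF1sub : F1 ⊆ (Set.pi Set.univ fun _ : Y => Set.Icc (0:ℝ) 1) ×ˢ Set.Icc (0:ℝ) 1 := by
    rintro p ⟨h1, h2, h3, h4, -⟩
    have hle1 : ∀ y, p.1 y ≤ 1 := by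
      intro y
      calc p.1 y ≤ ∑ y', p.1 y' :=
            Finset.single_le_sum (fun y' _ => h1 y') (Finset.mem_univ y)
        _ = 1 := h2
    exact ⟨fun y _ => ⟨h1 y, hle1 y⟩, h3, h4.trans (hle1 y0)⟩
  have hF1comp : IsCompact F1 :=
    IsCompact.of_isClosed_subset
      ((isCompact_univ_pi fun _ : Y => isCompact_Icc).prod isCompact_Icc) hF1closed hF1sub
  have hLcont : Continuous L := Lmap_continuous r φ0 y0
  obtain ⟨pm, hpmF, hpmmax⟩ :=
    hF1comp.exists_isMaxOn ⟨_, hp0⟩ hLcont.continuousOn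
  set M : Set ((Y → ℝ) × ℝ) := F1 ∩ {p | L pm ≤ L p} with hM
  have hMcomp : IsCompact M := hF1comp.inter_right (isClosed_le continuous_const hLcont)
  have hpmM : pm ∈ M := ⟨hpmF, show L pm ≤ L pm from le_rfl⟩
  obtain ⟨ps, hpsM, hpsmin⟩ :=
    hMcomp.exists_isMinOn ⟨pm, hpmM⟩ continuous_snd.continuousOn
  obtain ⟨hpsF, hpsL⟩ := hpsM
  obtain ⟨hxnn, hxsum, hμnn, hμle, hstat⟩ := hpsF
  have hLps : ∑ y, pi y * r y * φ y ≤ L ps := by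
    rw [← hLp0]; exact (hpmmax hp0).trans hpsL
  -- case analysis
  by_cases hc0 : ps.2 = 0
  · -- lam = 0
    refine ⟨0, Or.inl rfl, ps.1, hxnn, hxsum, ?_, ?_⟩
    · intro y'
      rw [hA 0 ps.1 y', zero_mul]
      have : ((ps.1, (0:ℝ)) : (Y → ℝ) × ℝ) = ps := by rw [← hc0]
      rw [this]
      exact hstat y'
    · rw [hV 0 ps.1, zero_mul]
      have : ((ps.1, (0:ℝ)) : (Y → ℝ) × ℝ) = ps := by rw [← hc0]
      rw [this]
      exact hLps
  by_cases hc1 : ps.2 = ps.1 y0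
  · -- lam = 1
    refine ⟨1, Or.inr rfl, ps.1, hxnn, hxsum, ?_, ?_⟩
    · intro y'
      rw [hA 1 ps.1 y', one_mul]
      have : ((ps.1, ps.1 y0) : (Y → ℝ) × ℝ) = ps := by rw [← hc1]
      rw [this]
      exact hstat y'
    · rw [hV 1 ps.1, one_mul]
      have : ((ps.1, ps.1 y0) : (Y → ℝ) × ℝ) = ps := by rw [← hc1]
      rw [this]
      exact hLps
  -- contradiction case : 0 < ps.2 < ps.1 y0
  exfalso
  have hμpos : 0 < ps.2 := lt_of_le_of_ne hμnn (Ne.symm hc0)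
  have hμlt : ps.2 < ps.1 y0 := lt_of_le_of_ne hμle hc1
  have hxy0pos : 0 < ps.1 y0 := hμpos.trans hμlt
  set lam : ℝ := ps.2 / ps.1 y0 with hlam
  have hlampos : 0 < lam := div_pos hμpos hxy0pos
  have hlamlt : lam < 1 := (div_lt_one hxy0pos).mpr hμlt
  have hlammul : lam * ps.1 y0 = ps.2 := div_mul_cancel₀ _ (ne_of_gt hxy0pos)
  set T : Finset Y := Finset.univ.filter (fun y => 0 < ps.1 y) with hT
  have hy0T : y0 ∈ T := by rw [hT]; exact Finset.mem_filter.mpr ⟨Finset.mem_univ _, hxy0pos⟩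
  have hnotT : ∀ y, y ∉ T → ps.1 y = 0 := by
    intro y hy
    rw [hT, Finset.mem_filter] at hy
    push_neg at hy
    exact le_antisymm (hy (Finset.mem_univ y)) (hxnn y)
  -- stationarity for the mixed policy lam at y0
  have hstatlam : ∀ y', ∑ y, ps.1 y * (Function.update φ y0 lam y * PW y y' +
      (1 - Function.update φ y0 lam y) * PR y y') = ps.1 y' := by
    intro y'
    rw [hA lam ps.1 y', hlammul]
    have : ((ps.1, ps.2) : (Y → ℝ) × ℝ) = ps := rfl
    rw [this]
    exact hstat y'
  -- the matrix P^{φ0}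
  set Pmat : Matrix Y Y ℝ := fun y y' => φ0 y * PW y y' + (1 - φ0 y) * PR y y' with hPmat
  have hPnn : ∀ y y', 0 ≤ Pmat y y' := by
    intro y y'
    have h0 := (hφ0mem y).1
    have h1 := (hφ0mem y).2
    rw [hPmat]
    dsimp only
    exact add_nonneg (mul_nonneg h0 (hWnn y y')) (mul_nonneg (by linarith) (hRnn y y'))
  have hProw : ∀ y, ∑ y', Pmat y y' = 1 := by
    intro y
    rw [hPmat]
    dsimp only
    rw [Finset.sum_add_distrib]
    simp_rw [← Finset.mul_sum]
    rw [hWrow, hRrow]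
    ring
  have hclosure : ∀ y ∈ T, ∀ y' ∉ T, Pmat y y' = 0 := by
    intro y hy y' hy'
    have hxy : 0 < ps.1 y := by
      rw [hT, Finset.mem_filter] at hy
      exact hy.2
    have hxy' : ps.1 y' = 0 := hnotT y' hy'
    -- every term in the stationarity sum at y' vanishes
    have hsum0 : ∑ yy, ps.1 yy * (Function.update φ y0 lam yy * PW yy y' +
        (1 - Function.update φ y0 lam yy) * PR yy y') = 0 := by
      rw [hstatlam y', hxy']
    have hterm : ∀ yy, 0 ≤ ps.1 yy * (Function.update φ y0 lam yy * PW yy y' +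
        (1 - Function.update φ y0 lam yy) * PR yy y') := by
      intro yy
      have hmem : Function.update φ y0 lam yy ∈ Set.Icc (0:ℝ) 1 := by
        by_cases h : yy = y0
        · subst h; rw [Function.update_self]; exact ⟨hlampos.le, hlamlt.le⟩
        · rw [Function.update_of_ne h]; exact hφ yy
      have h0 := hmem.1
      have h1 := hmem.2
      exact mul_nonneg (hxnn yy) (add_nonneg (mul_nonneg h0 (hWnn yy y'))
        (mul_nonneg (by linarith) (hRnn yy y')))
    have hzero := (Finset.sum_eq_zero_iff_of_nonneg (fun yy _ => hterm yy)).mp hsum0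
      y (Finset.mem_univ y)
    have hPz : Function.update φ y0 lam y * PW y y' +
        (1 - Function.update φ y0 lam y) * PR y y' = 0 := by
      rcases mul_eq_zero.mp hzero with h | h
      · exact absurd h (ne_of_gt hxy)
      · exact h
    by_cases h : y = y0
    · subst h
      rw [Function.update_self] at hPz
      have hW0 : PW y y' = 0 := by
        have h1 : 0 ≤ lam * PW y y' := mul_nonneg hlampos.le (hWnn y y')
        have h2 : 0 ≤ (1 - lam) * PR y y' := mul_nonneg (by linarith) (hRnn y y')
        have h3 : lam * PW y y' = 0 := by linarith
        rcases mul_eq_zero.mp h3 with h | h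
        · exact absurd h (ne_of_gt hlampos)
        · exact h
      have hR0 : PR y y' = 0 := by
        have h1 : 0 ≤ lam * PW y y' := mul_nonneg hlampos.le (hWnn y y')
        have h2 : 0 ≤ (1 - lam) * PR y y' := mul_nonneg (by linarith) (hRnn y y')
        have h3 : (1 - lam) * PR y y' = 0 := by linarith
        rcases mul_eq_zero.mp h3 with h | h
        · exact absurd h (by intro hh; linarith : (1:ℝ) - lam ≠ 0)
        · exact h
      rw [hPmat]
      dsimp only
      rw [hW0, hR0]
      ring
    · rw [hPmat]
      dsimp only
      rw [hφ0ne y h]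
      rw [Function.update_of_ne h] at hPz
      exact hPz
  obtain ⟨z, hznn, hzT, hzsum, hzstat⟩ :=
    exists_stationary Pmat hPnn hProw T y0 hy0T hclosure
  have hGz : ∀ y', G (z, 0) y' = z y' := by
    intro y'
    show (∑ y, z y * (φ0 y * PW y y' + (1 - φ0 y) * PR y y')) + 0 * (PW y0 y' - PR y0 y') = z y'
    rw [zero_mul, add_zero]
    exact hzstat y'
  -- choose a perturbation size
  set Aden : ℝ := |z y0 - ps.1 y0 + ps.2| + 1 with hAden
  have hAdenpos : 0 < Aden := by positivity
  set ε : ℝ := min (min 1 ((ps.1 y0 - ps.2) / Aden))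
      (T.inf' ⟨y0, hy0T⟩ fun y => ps.1 y / (|z y - ps.1 y| + 1)) with hε
  have hεpos : 0 < ε := by
    apply lt_min
    · exact lt_min one_pos (div_pos (by linarith) hAdenpos)
    · apply (Finset.lt_inf'_iff _).2
      intro y hy
      have hpos : 0 < ps.1 y := by
        rw [hT, Finset.mem_filter] at hy
        exact hy.2
      positivity
  have hε1 : ε ≤ 1 := le_trans (min_le_left _ _) (min_le_left _ _)
  have hεA : ε * |z y0 - ps.1 y0 + ps.2| < ps.1 y0 - ps.2 := by
    have h1 : ε ≤ (ps.1 y0 - ps.2) / Aden := le_trans (min_le_left _ _) (min_le_right _ _)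
    have h2 : ε * Aden ≤ ps.1 y0 - ps.2 := (le_div_iff₀ hAdenpos).mp h1
    have h3 : ε * Aden = ε * |z y0 - ps.1 y0 + ps.2| + ε := by rw [hAden]; ring
    linarith
  -- the perturbed points are feasible
  have hxt : ∀ t : ℝ, |t| ≤ ε → ∀ y, 0 ≤ ps.1 y + t * (z y - ps.1 y) := by
    intro t ht y
    by_cases hy : y ∈ T
    · have h1 : ε ≤ ps.1 y / (|z y - ps.1 y| + 1) :=
        le_trans (min_le_right _ _) (Finset.inf'_le _ hy)
      have h2 : ε * (|z y - ps.1 y| + 1) ≤ ps.1 y := (le_div_iff₀ (by positivity)).mp h1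
      have h3 : |t * (z y - ps.1 y)| ≤ ε * |z y - ps.1 y| := by
        rw [abs_mul]
        exact mul_le_mul_of_nonneg_right ht (abs_nonneg _)
      have h4 := neg_abs_le (t * (z y - ps.1 y))
      have h5 : ε * (|z y - ps.1 y| + 1) = ε * |z y - ps.1 y| + ε := by ring
      linarith
    · rw [hnotT y hy, hzT y hy]
      simp
  have hfeas : ∀ t : ℝ, |t| ≤ ε →
      ((fun y => ps.1 y + t * (z y - ps.1 y), ps.2 + t * (0 - ps.2)) :
        (Y → ℝ) × ℝ) ∈ F1 := by
    intro t ht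
    have habs := abs_le.mp ht
    refine ⟨hxt t ht, ?_, ?_, ?_, ?_⟩
    · show ∑ y, (ps.1 y + t * (z y - ps.1 y)) = 1
      have hexp : ∑ y, (ps.1 y + t * (z y - ps.1 y)) =
          (∑ y, ps.1 y) + t * ((∑ y, z y) - ∑ y, ps.1 y) := by
        rw [Finset.sum_add_distrib, ← Finset.mul_sum, Finset.sum_sub_distrib]
      rw [hexp, hxsum, hzsum]
      ring
    · show 0 ≤ ps.2 + t * (0 - ps.2)
      have hrew : ps.2 + t * (0 - ps.2) = (1 - t) * ps.2 := by ring
      rw [hrew]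
      exact mul_nonneg (by linarith) hμnn
    · show ps.2 + t * (0 - ps.2) ≤ ps.1 y0 + t * (z y0 - ps.1 y0)
      have h3 : |t * (z y0 - ps.1 y0 + ps.2)| ≤ ε * |z y0 - ps.1 y0 + ps.2| := by
        rw [abs_mul]
        exact mul_le_mul_of_nonneg_right ht (abs_nonneg _)
      have h4 := neg_abs_le (t * (z y0 - ps.1 y0 + ps.2))
      nlinarith [hεA]
    · intro y'
      have hline : G (fun y => ps.1 y + t * (z y - ps.1 y), ps.2 + t * (0 - ps.2)) y' =
          G (ps.1, ps.2) y' + t * (G (z, 0) y' - G (ps.1, ps.2) y') := by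
        rw [hG]
        exact Gmap_line PW PR φ0 y0 ps.1 z ps.2 0 t y'
      have heta : ((ps.1, ps.2) : (Y → ℝ) × ℝ) = ps := rfl
      rw [hline, heta, hstat y', hGz y']
  have hLline : ∀ t : ℝ,
      L ((fun y => ps.1 y + t * (z y - ps.1 y), ps.2 + t * (0 - ps.2)) : (Y → ℝ) × ℝ) =
        L ps + t * (L (z, 0) - L ps) := by
    intro t
    have heta : ((ps.1, ps.2) : (Y → ℝ) × ℝ) = ps := rfl
    rw [hL, ← heta]
    exact Lmap_line r φ0 y0 ps.1 z ps.2 0 t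
  have hplusF := hfeas ε (by rw [abs_of_pos hεpos])
  have hminusF := hfeas (-ε) (by rw [abs_neg, abs_of_pos hεpos])
  have hplus := hpmmax hplusF
  have hminus := hpmmax hminusF
  simp only [Set.mem_setOf_eq] at hplus hminus
  rw [hLline] at hplus hminus
  have hLpsge : L pm ≤ L ps := hpsL
  have hΔ : L (z, 0) - L ps = 0 := by
    have h1 : ε * (L (z, 0) - L ps) ≤ 0 := by linarith
    have h2 : 0 ≤ ε * (L (z, 0) - L ps) := by nlinarith
    have h3 : ε * (L (z, 0) - L ps) = 0 := le_antisymm h1 h2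
    rcases mul_eq_zero.mp h3 with h | h
    · exact absurd h (ne_of_gt hεpos)
    · exact h
  have hpM : ((fun y => ps.1 y + ε * (z y - ps.1 y), ps.2 + ε * (0 - ps.2)) :
      (Y → ℝ) × ℝ) ∈ M := by
    refine ⟨hplusF, ?_⟩
    show L pm ≤ _
    rw [hLline, hΔ, mul_zero, add_zero]
    exact hLpsge
  have := hpsmin hpM
  simp only [Prod.snd] at this
  have hcontra : ps.2 ≤ ps.2 + ε * (0 - ps.2) := this
  nlinarith

end step

lemma derandom_all {Y : Type*} [Fintype Y] [DecidableEq Y] (PW PR : Matrix Y Y ℝ)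
    (hWnn : ∀ y y', 0 ≤ PW y y') (hWrow : ∀ y, ∑ y', PW y y' = 1)
    (hRnn : ∀ y y', 0 ≤ PR y y') (hRrow : ∀ y, ∑ y', PR y y' = 1)
    (r : Y → ℝ)
    (hstatex : ∀ (P : Matrix Y Y ℝ), (∀ y y', 0 ≤ P y y') →
      (∀ y, ∑ y', P y y' = 1) → ∀ (T : Finset Y) (z0 : Y), z0 ∈ T →
      (∀ y ∈ T, ∀ y' ∉ T, P y y' = 0) →
      ∃ z : Y → ℝ, (∀ y, 0 ≤ z y) ∧ (∀ y ∉ T, z y = 0) ∧ (∑ y, z y = 1) ∧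
        (∀ y', ∑ y, z y * P y y' = z y')) :
    ∀ (n : ℕ) (φ : Y → ℝ),
      (Finset.univ.filter (fun y => φ y ≠ 0 ∧ φ y ≠ 1)).card ≤ n →
      (∀ y, φ y ∈ Set.Icc (0:ℝ) 1) →
      ∀ pi : Y → ℝ, (∀ y, 0 ≤ pi y) → (∑ y, pi y = 1) →
      (∀ y', ∑ y, pi y * (φ y * PW y y' + (1 - φ y) * PR y y') = pi y') →
      ∃ φ' pi' : Y → ℝ, (∀ y, φ' y = 0 ∨ φ' y = 1) ∧ (∀ y, 0 ≤ pi' y) ∧ (∑ y, pi' y = 1) ∧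
        (∀ y', ∑ y, pi' y * (φ' y * PW y y' + (1 - φ' y) * PR y y') = pi' y') ∧
        ∑ y, pi y * r y * φ y ≤ ∑ y, pi' y * r y * φ' y := by
  intro n
  induction n with
  | zero =>
    intro φ hcard hφ pi hnn hsum hstat
    have hbin : ∀ y, φ y = 0 ∨ φ y = 1 := by
      intro y
      by_contra h
      push_neg at h
      have hy : y ∈ Finset.univ.filter (fun y => φ y ≠ 0 ∧ φ y ≠ 1) :=
        Finset.mem_filter.mpr ⟨Finset.mem_univ y, h⟩
      have := Finset.card_pos.mpr ⟨y, hy⟩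
      omega
    exact ⟨φ, pi, hbin, hnn, hsum, hstat, le_rfl⟩
  | succ n ih =>
    intro φ hcard hφ pi hnn hsum hstat
    by_cases hall : ∀ y, φ y = 0 ∨ φ y = 1
    · exact ⟨φ, pi, hall, hnn, hsum, hstat, le_rfl⟩
    · push_neg at hall
      obtain ⟨y0, hy0⟩ := hall
      obtain ⟨lam, hlam, pi', h'nn, h'sum, h'stat, hval⟩ :=
        derandom_step PW PR hWnn hWrow hRnn hRrow r φ hφ pi hnn hsum hstat y0 hstatex
      have hφ' : ∀ y, Function.update φ y0 lam y ∈ Set.Icc (0:ℝ) 1 := by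
        intro y
        by_cases h : y = y0
        · subst h
          rw [Function.update_self]
          rcases hlam with h | h <;> rw [h]
          · exact ⟨le_rfl, zero_le_one⟩
          · exact ⟨zero_le_one, le_rfl⟩
        · rw [Function.update_of_ne h]; exact hφ y
      have hy0mem : y0 ∈ Finset.univ.filter (fun y => φ y ≠ 0 ∧ φ y ≠ 1) :=
        Finset.mem_filter.mpr ⟨Finset.mem_univ y0, hy0⟩
      have hsubset : Finset.univ.filter
            (fun y => Function.update φ y0 lam y ≠ 0 ∧ Function.update φ y0 lam y ≠ 1) ⊆
          (Finset.univ.filter (fun y => φ y ≠ 0 ∧ φ y ≠ 1)).erase y0 := by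
        intro y hy
        rw [Finset.mem_filter] at hy
        have hne : y ≠ y0 := by
          intro h
          subst h
          rw [Function.update_self] at hy
          rcases hlam with h | h
          · exact hy.2.1 h
          · exact hy.2.2 h
        refine Finset.mem_erase.mpr ⟨hne, ?_⟩
        rw [Function.update_of_ne hne] at hy
        exact Finset.mem_filter.mpr ⟨Finset.mem_univ y, hy.2⟩
      have hcard' : (Finset.univ.filter
          (fun y => Function.update φ y0 lam y ≠ 0 ∧ Function.update φ y0 lam y ≠ 1)).card ≤ n := by
        have h1 := Finset.card_le_card hsubset
        have h2 := Finset.card_erase_of_mem hy0mem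
        have h3 := Finset.card_pos.mpr ⟨y0, hy0mem⟩
        omega
      obtain ⟨φ'', pi'', hbin, h''nn, h''sum, h''stat, hval2⟩ :=
        ih (Function.update φ y0 lam) hcard' hφ' pi' h'nn h'sum h'stat
      exact ⟨φ'', pi'', hbin, h''nn, h''sum, h''stat, hval.trans hval2⟩

/-- Optimality of deterministic policies for the long-run average reward on a finite
two-action MDP: the supremum over randomized stationary policies `φ : Y → [0,1]` of the
long-run average reward (computed via stationary distributions of
`P^φ = φ P^W + (1−φ) P^R`) equals the supremum restricted to deterministic policies
(`φ` taking values in `{0,1}`). -/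
theorem stmt17 {Y : Type*} [Fintype Y]
    (PW PR : Matrix Y Y ℝ)
    (hWnn : ∀ y y', 0 ≤ PW y y') (hWrow : ∀ y, ∑ y', PW y y' = 1)
    (hRnn : ∀ y y', 0 ≤ PR y y') (hRrow : ∀ y, ∑ y', PR y y' = 1)
    (r : Y → ℝ) (hr : ∀ y, r y ∈ Set.Ioo (0 : ℝ) 1) :
    sSup {v : ℝ | ∃ φ : Y → ℝ, (∀ y, φ y ∈ Set.Icc (0 : ℝ) 1) ∧
        ∃ pi : Y → ℝ, (∀ y, 0 ≤ pi y) ∧ (∑ y, pi y = 1) ∧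
          (∀ y', ∑ y, pi y * (φ y * PW y y' + (1 - φ y) * PR y y') = pi y') ∧
          v = ∑ y, pi y * r y * φ y} =
    sSup {v : ℝ | ∃ φ : Y → ℝ, (∀ y, φ y = 0 ∨ φ y = 1) ∧
        ∃ pi : Y → ℝ, (∀ y, 0 ≤ pi y) ∧ (∑ y, pi y = 1) ∧
          (∀ y', ∑ y, pi y * (φ y * PW y y' + (1 - φ y) * PR y y') = pi y') ∧
          v = ∑ y, pi y * r y * φ y} := by
  classical
  set SL : Set ℝ := {v : ℝ | ∃ φ : Y → ℝ, (∀ y, φ y ∈ Set.Icc (0 : ℝ) 1) ∧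
      ∃ pi : Y → ℝ, (∀ y, 0 ≤ pi y) ∧ (∑ y, pi y = 1) ∧
        (∀ y', ∑ y, pi y * (φ y * PW y y' + (1 - φ y) * PR y y') = pi y') ∧
        v = ∑ y, pi y * r y * φ y} with hSL
  set SR : Set ℝ := {v : ℝ | ∃ φ : Y → ℝ, (∀ y, φ y = 0 ∨ φ y = 1) ∧
      ∃ pi : Y → ℝ, (∀ y, 0 ≤ pi y) ∧ (∑ y, pi y = 1) ∧
        (∀ y', ∑ y, pi y * (φ y * PW y y' + (1 - φ y) * PR y y') = pi y') ∧
        v = ∑ y, pi y * r y * φ y} with hSR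
  have hsub : SR ⊆ SL := by
    rintro v ⟨φ, hφ, pi, h1, h2, h3, h4⟩
    refine ⟨φ, fun y => ?_, pi, h1, h2, h3, h4⟩
    rcases hφ y with h | h <;> rw [h]
    · exact ⟨le_rfl, zero_le_one⟩
    · exact ⟨zero_le_one, le_rfl⟩
  have hbddL : BddAbove SL := by
    refine ⟨1, fun v hv => ?_⟩
    obtain ⟨φ, hφ, pi, h1, h2, h3, h4⟩ := hv
    rw [h4, ← h2]
    refine Finset.sum_le_sum fun y _ => ?_
    have hrφ : r y * φ y ≤ 1 :=
      mul_le_one₀ (hr y).2.le (hφ y).1 (hφ y).2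
    calc pi y * r y * φ y = pi y * (r y * φ y) := mul_assoc _ _ _
      _ ≤ pi y * 1 := mul_le_mul_of_nonneg_left hrφ (h1 y)
      _ = pi y := mul_one _
  have hbddR : BddAbove SR := hbddL.mono hsub
  rcases SL.eq_empty_or_nonempty with hL | hL
  · have hRempty : SR = ∅ := Set.eq_empty_of_subset_empty (hL ▸ hsub)
    rw [hL, hRempty]
  · have hkey : ∀ v ∈ SL, ∃ w ∈ SR, v ≤ w := by
      rintro v ⟨φ, hφ, pi, h1, h2, h3, h4⟩
      obtain ⟨φ', pi', hbin, h'nn, h'sum, h'stat, hval⟩ :=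
        derandom_all PW PR hWnn hWrow hRnn hRrow r
          (fun P hPnn hProw T z0 hz0 hcl => exists_stationary P hPnn hProw T z0 hz0 hcl)
          (Finset.univ.filter (fun y => φ y ≠ 0 ∧ φ y ≠ 1)).card φ le_rfl hφ pi h1 h2 h3
      exact ⟨∑ y, pi' y * r y * φ' y, ⟨φ', hbin, pi', h'nn, h'sum, h'stat, rfl⟩,
        h4 ▸ hval⟩
    have hRne : SR.Nonempty := by
      obtain ⟨v, hv⟩ := hL
      obtain ⟨w, hw, -⟩ := hkey v hv
      exact ⟨w, hw⟩
    apply le_antisymm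
    · apply csSup_le hL
      intro v hv
      obtain ⟨w, hw, hvw⟩ := hkey v hv
      exact hvw.trans (le_csSup hbddR hw)
    · exact csSup_le_csSup hbddL hRne hsub
end
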